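/- For n ≥ 1, the maximum size M(n,1) of a single-grain-error-correcting code of length n satisfies M(n,1) ≤ 2·⌊(2^{n+1} − 2)/(2n)⌋. -/

import Mathlib

/-- `e` is a `t`-grain-error for `x`: weight at most `t`, `e₁ = 0`, and an error at
position `i` (2 ≤ i ≤ n) requires `x_i ≠ x_{i-1}`. (0-indexed here.) -/
def grainError {n : ℕ} (t : ℕ) (x e : Fin n → ZMod 2) : Prop :=
  (Finset.univ.filter fun i => e i ≠ 0).card ≤ t ∧
  (∀ i : Fin n, (i : ℕ) = 0 → e i = 0) ∧
  (∀ i : Fin n, 0 < (i : ℕ) → e i ≠ 0 →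
    x i ≠ x ⟨(i : ℕ) - 1, lt_of_le_of_lt (Nat.sub_le _ _) i.isLt⟩)

/-- The grain error-ball `B_{t,G}(x)`. -/
def grainBall {n : ℕ} (t : ℕ) (x : Fin n → ZMod 2) : Set (Fin n → ZMod 2) :=
  {y | ∃ e, grainError t x e ∧ y = x + e}

/-- The number of runs of a binary vector. -/
def runs {n : ℕ} (x : Fin n → ZMod 2) : ℕ :=
  (if n = 0 then 0 else 1) +
  (Finset.univ.filter fun i : Fin n =>
    0 < (i : ℕ) ∧ x i ≠ x ⟨(i : ℕ) - 1, lt_of_le_of_lt (Nat.sub_le _ _) i.isLt⟩).card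

def grainCorrecting {n : ℕ} (t : ℕ) (C : Finset (Fin n → ZMod 2)) : Prop :=
  ∀ x ∈ C, ∀ y ∈ C, x ≠ y → Disjoint (grainBall t x) (grainBall t y)

section Aux
variable {n : ℕ}

def gPrev (i : Fin n) : Fin n := ⟨(i : ℕ) - 1, lt_of_le_of_lt (Nat.sub_le _ _) i.isLt⟩

def gT (x : Fin n → ZMod 2) : Finset (Fin n) :=
  Finset.univ.filter fun i : Fin n => 0 < (i : ℕ) ∧ x i ≠ x (gPrev i)

lemma gT_mem {x : Fin n → ZMod 2} {i : Fin n} :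
    i ∈ gT x ↔ 0 < (i : ℕ) ∧ x i ≠ x (gPrev i) := by simp [gT]

lemma runs_eq (hn : n ≠ 0) (x : Fin n → ZMod 2) : runs x = 1 + (gT x).card := by
  simp [runs, gT, gPrev, hn]
  congr 1

def gFlip (x : Fin n → ZMod 2) (i : Fin n) : Fin n → ZMod 2 := x + Pi.single i 1

lemma gFlip_apply (x : Fin n → ZMod 2) (i j : Fin n) :
    gFlip x i j = x j + if j = i then 1 else 0 := by
  simp [gFlip, Pi.single_apply]

lemma zmod2_ne_iff {a b : ZMod 2} : a ≠ b ↔ a = b + 1 := by revert a b; decide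

lemma zmod2_add_one_ne (a : ZMod 2) : a + 1 ≠ a := by revert a; decide

lemma zmod2_aa (a : ZMod 2) : a + 1 + 1 = a := by revert a; decide

def gBall (x : Fin n → ZMod 2) : Finset (Fin n → ZMod 2) :=
  insert x ((gT x).image (gFlip x))

lemma gFlip_ne (x : Fin n → ZMod 2) (i : Fin n) : gFlip x i ≠ x := by
  intro h
  have := congrFun h i
  rw [gFlip_apply, if_pos rfl] at this
  exact zmod2_add_one_ne _ this

lemma card_gBall (hn : n ≠ 0) (x : Fin n → ZMod 2) : (gBall x).card = runs x := by
  rw [gBall, Finset.card_insert_of_notMem, Finset.card_image_of_injOn, runs_eq hn,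
    add_comm]
  · intro i _ j _ hij
    by_contra hne
    have := congrFun hij i
    rw [gFlip_apply, gFlip_apply, if_pos rfl, if_neg hne, add_zero] at this
    exact zmod2_add_one_ne _ this
  · simp only [Finset.mem_image]
    rintro ⟨i, -, h⟩
    exact gFlip_ne x i h

def gNxt (i : Fin n) : Fin n := if h : (i : ℕ) + 1 < n then ⟨(i : ℕ) + 1, h⟩ else i

lemma gT_gFlip_subset {x : Fin n → ZMod 2} {i : Fin n} (hi : i ∈ gT x) :
    gT (gFlip x i) ⊆ insert (gNxt i) ((gT x).erase i) := by
  intro k hk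
  rw [gT_mem] at hk
  obtain ⟨hk0, hkt⟩ := hk
  obtain ⟨hi0, hit⟩ := gT_mem.1 hi
  by_cases hki : k = i
  · subst hki
    exfalso
    apply hkt
    have hpne : gPrev k ≠ k := by
      intro h
      have := congrArg Fin.val h
      simp [gPrev] at this
      omega
    rw [gFlip_apply, gFlip_apply, if_pos rfl, if_neg hpne, add_zero]
    rw [zmod2_ne_iff] at hit
    rw [hit, zmod2_aa]
  · by_cases hki1 : (k : ℕ) = (i : ℕ) + 1
    · have hlt : (i : ℕ) + 1 < n := hki1 ▸ k.isLt
      have : k = gNxt i := by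
        rw [gNxt, dif_pos hlt]
        exact Fin.ext hki1
      rw [this]
      exact Finset.mem_insert_self _ _
    · apply Finset.mem_insert_of_mem
      rw [Finset.mem_erase]
      refine ⟨hki, gT_mem.2 ⟨hk0, ?_⟩⟩
      have hpki : gPrev k ≠ i := by
        intro h
        have := congrArg Fin.val h
        simp [gPrev] at this
        omega
      rwa [gFlip_apply, gFlip_apply, if_neg hki, if_neg hpki, add_zero, add_zero] at hkt

lemma runs_gFlip_le (hn : n ≠ 0) {x : Fin n → ZMod 2} {i : Fin n} (hi : i ∈ gT x) :
    runs (gFlip x i) ≤ runs x := by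
  rw [runs_eq hn, runs_eq hn]
  have h1 := Finset.card_le_card (gT_gFlip_subset hi)
  have h2 := Finset.card_insert_le (gNxt i) ((gT x).erase i)
  have h3 := Finset.card_erase_of_mem hi
  have h4 : 0 < (gT x).card := Finset.card_pos.2 ⟨i, hi⟩
  omega


lemma gBall_subset (x : Fin n → ZMod 2) : ∀ z ∈ gBall x, z ∈ grainBall 1 x := by
  intro z hz
  rw [gBall, Finset.mem_insert, Finset.mem_image] at hz
  rcases hz with rfl | ⟨i, hi, rfl⟩
  · refine ⟨0, ⟨?_, fun i _ => rfl, fun i _ h => absurd rfl h⟩, by simp⟩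
    simp
  · obtain ⟨hi0, hit⟩ := gT_mem.1 hi
    refine ⟨Pi.single i 1, ⟨?_, ?_, ?_⟩, rfl⟩
    · have : (Finset.univ.filter fun j => (Pi.single i 1 : Fin n → ZMod 2) j ≠ 0) = {i} := by
        ext j
        by_cases h : j = i <;> simp [Pi.single_apply, h]
      rw [this, Finset.card_singleton]
    · intro j hj
      have : j ≠ i := by
        intro h; rw [h] at hj; omega
      simp [Pi.single_apply, this]
    · intro j hj0 hj
      have : j = i := by
        by_contra h
        simp [Pi.single_apply, h] at hj
      subst this
      exact hit

lemma gBall_first (hn : 0 < n) (x : Fin n → ZMod 2) :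
    ∀ z ∈ gBall x, z ⟨0, hn⟩ = x ⟨0, hn⟩ := by
  intro z hz
  rw [gBall, Finset.mem_insert, Finset.mem_image] at hz
  rcases hz with rfl | ⟨i, hi, rfl⟩
  · rfl
  · obtain ⟨hi0, -⟩ := gT_mem.1 hi
    rw [gFlip_apply, if_neg, add_zero]
    intro h
    rw [← h] at hi0
    simp at hi0

lemma runs_pos (hn : n ≠ 0) (x : Fin n → ZMod 2) : 0 < runs x := by
  rw [runs_eq hn]; omega

lemma gBall_runs_le (hn : n ≠ 0) (x : Fin n → ZMod 2) :
    ∀ z ∈ gBall x, runs z ≤ runs x := by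
  intro z hz
  rw [gBall, Finset.mem_insert, Finset.mem_image] at hz
  rcases hz with rfl | ⟨i, hi, rfl⟩
  · exact le_refl _
  · exact runs_gFlip_le hn hi

lemma one_le_sum_gBall (hn : n ≠ 0) (x : Fin n → ZMod 2) :
    1 ≤ ∑ z ∈ gBall x, ((runs z : ℚ))⁻¹ := by
  have hx : (0 : ℚ) < (runs x : ℚ) := by exact_mod_cast runs_pos hn x
  have hle : ∀ z ∈ gBall x, ((runs x : ℚ))⁻¹ ≤ ((runs z : ℚ))⁻¹ := by
    intro z hz
    apply inv_anti₀
    · exact_mod_cast runs_pos hn z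
    · exact_mod_cast gBall_runs_le hn x z hz
  have := Finset.card_nsmul_le_sum (gBall x) _ _ hle
  rw [card_gBall hn, nsmul_eq_mul] at this
  calc (1 : ℚ) = (runs x : ℚ) * ((runs x : ℚ))⁻¹ := (mul_inv_cancel₀ (ne_of_gt hx)).symm
  _ ≤ _ := this


def gS (n : ℕ) : Finset (Fin n) := Finset.univ.filter fun i => 0 < (i : ℕ)

lemma gT_subset_gS (x : Fin n → ZMod 2) : gT x ⊆ gS n := by
  intro i hi
  simp only [gS, Finset.mem_filter, Finset.mem_univ, true_and]
  exact (gT_mem.1 hi).1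

lemma card_gS (hn : 0 < n) : (gS n).card = n - 1 := by
  have he : gS n = Finset.univ.erase ⟨0, hn⟩ := by
    ext i
    simp only [gS, Finset.mem_filter, Finset.mem_univ, true_and, Finset.mem_erase, and_true,
      Ne, Fin.ext_iff]
    omega
  rw [he, Finset.card_erase_of_mem (Finset.mem_univ _), Finset.card_univ, Fintype.card_fin]

def gVec (b : ZMod 2) (A : Finset (Fin n)) : Fin n → ZMod 2 :=
  fun i => b + (((A.filter fun j : Fin n => (j : ℕ) ≤ (i : ℕ)).card : ℕ) : ZMod 2)

lemma gVec_zero {b : ZMod 2} {A : Finset (Fin n)} (hA : A ⊆ gS n) (i : Fin n)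
    (hi : (i : ℕ) = 0) : gVec b A i = b := by
  have he : A.filter (fun j : Fin n => (j : ℕ) ≤ (i : ℕ)) = ∅ := by
    apply Finset.filter_false_of_mem
    intro j hj
    have := hA hj
    simp only [gS, Finset.mem_filter, Finset.mem_univ, true_and] at this
    omega
  show b + (((A.filter fun j : Fin n => (j : ℕ) ≤ (i : ℕ)).card : ℕ) : ZMod 2) = b
  rw [he]
  simp

lemma gVec_card_step {A : Finset (Fin n)} (m : ℕ) (h : m + 1 < n) :
    (A.filter fun j : Fin n => (j : ℕ) ≤ m + 1).card
      = (A.filter fun j : Fin n => (j : ℕ) ≤ m).card + (if (⟨m+1, h⟩ : Fin n) ∈ A then 1 else 0) := by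
  by_cases hm : (⟨m+1, h⟩ : Fin n) ∈ A
  · rw [if_pos hm]
    have he : (A.filter fun j : Fin n => (j : ℕ) ≤ m + 1)
        = insert ⟨m+1, h⟩ (A.filter fun j : Fin n => (j : ℕ) ≤ m) := by
      ext j
      simp only [Finset.mem_filter, Finset.mem_insert]
      constructor
      · rintro ⟨hjA, hle⟩
        by_cases hj : (j : ℕ) ≤ m
        · exact Or.inr ⟨hjA, hj⟩
        · exact Or.inl (Fin.ext (show (j : ℕ) = m + 1 by omega))
      · rintro (rfl | ⟨hjA, hle⟩)
        · exact ⟨hm, le_refl _⟩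
        · exact ⟨hjA, by omega⟩
    rw [he, Finset.card_insert_of_notMem]
    simp only [Finset.mem_filter, not_and]
    intro _
    show ¬ (m + 1 : ℕ) ≤ m
    omega
  · rw [if_neg hm, add_zero]
    congr 1
    ext j
    simp only [Finset.mem_filter, and_congr_right_iff]
    intro hjA
    constructor
    · intro hle
      by_cases hj : (j : ℕ) ≤ m
      · exact hj
      · exfalso
        apply hm
        have hje : j = ⟨m+1, h⟩ := Fin.ext (show (j : ℕ) = m + 1 by omega)
        rwa [hje] at hjA
    · intro hle
      omega

lemma gVec_step (b : ZMod 2) {A : Finset (Fin n)} (m : ℕ) (h : m + 1 < n) :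
    gVec b A ⟨m+1, h⟩
      = gVec b A ⟨m, by omega⟩ + (if (⟨m+1, h⟩ : Fin n) ∈ A then 1 else 0) := by
  show b + (((A.filter fun j : Fin n => (j : ℕ) ≤ m + 1).card : ℕ) : ZMod 2)
      = b + (((A.filter fun j : Fin n => (j : ℕ) ≤ m).card : ℕ) : ZMod 2)
        + (if (⟨m+1, h⟩ : Fin n) ∈ A then 1 else 0)
  rw [gVec_card_step m h]
  by_cases hm : (⟨m+1, h⟩ : Fin n) ∈ A <;> simp [hm, add_assoc]

lemma gT_gVec (b : ZMod 2) {A : Finset (Fin n)} (hA : A ⊆ gS n) : gT (gVec b A) = A := by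
  ext i
  rcases i with ⟨iv, hlt⟩
  rw [gT_mem]
  cases iv with
  | zero =>
    have hnot : (⟨0, hlt⟩ : Fin n) ∉ A := by
      intro h
      have := hA h
      simp [gS] at this
    simp [hnot]
  | succ m =>
    have hprev : gPrev (⟨m+1, hlt⟩ : Fin n) = ⟨m, by omega⟩ := rfl
    rw [hprev, gVec_step b m hlt]
    by_cases hm : (⟨m+1, hlt⟩ : Fin n) ∈ A
    · simp [hm, zmod2_add_one_ne]
    · simp [hm]

lemma gVec_gT (hn : 0 < n) (z : Fin n → ZMod 2) : gVec (z ⟨0, hn⟩) (gT z) = z := by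
  have key : ∀ m (h : m < n), gVec (z ⟨0, hn⟩) (gT z) ⟨m, h⟩ = z ⟨m, h⟩ := by
    intro m
    induction m with
    | zero => exact fun h => gVec_zero (gT_subset_gS z) _ rfl
    | succ m ih =>
      intro h
      rw [gVec_step _ m h, ih (by omega)]
      by_cases ht : (⟨m+1, h⟩ : Fin n) ∈ gT z
      · rw [if_pos ht]
        obtain ⟨-, hne⟩ := gT_mem.1 ht
        rw [zmod2_ne_iff] at hne
        exact hne.symm
      · rw [if_neg ht, add_zero]
        by_contra hne
        exact ht (gT_mem.2 ⟨Nat.succ_pos m, Ne.symm hne⟩)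
  funext i
  exact key i.1 i.2


lemma sum_powerset_inv (s : Finset (Fin n)) :
    ∑ A ∈ s.powerset, (((1 + A.card : ℕ)) : ℚ)⁻¹
      = ∑ k ∈ Finset.range (s.card + 1), (s.card.choose k : ℚ) * (((1 + k : ℕ)) : ℚ)⁻¹ := by
  simpa [nsmul_eq_mul] using
    Finset.sum_powerset_apply_card (fun k => (((1 + k : ℕ)) : ℚ)⁻¹) (x := s)

lemma nat_choose_sum (m : ℕ) :
    ∑ k ∈ Finset.range (m + 1), (m + 1).choose (k + 1) = 2 ^ (m + 1) - 1 := by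
  have h := Nat.sum_range_choose (m + 1)
  have h2 := Finset.sum_range_succ' (fun j => (m + 1).choose j) (m + 1)
  rw [h] at h2
  simp only [Nat.choose_zero_right] at h2
  omega

lemma q_choose_sum (hn : 0 < n) :
    ∑ k ∈ Finset.range n, ((n - 1).choose k : ℚ) * (((1 + k : ℕ)) : ℚ)⁻¹
      = (2 ^ n - 1) / (n : ℚ) := by
  obtain ⟨m, rfl⟩ : ∃ m, n = m + 1 := ⟨n - 1, by omega⟩
  have hnq : ((m + 1 : ℕ) : ℚ) ≠ 0 := by positivity
  rw [eq_div_iff (by push_cast at hnq ⊢; exact hnq)]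
  rw [Finset.sum_mul]
  have hterm : ∀ k ∈ Finset.range (m + 1),
      ((m + 1 - 1).choose k : ℚ) * (((1 + k : ℕ)) : ℚ)⁻¹ * ((m + 1 : ℕ) : ℚ)
        = ((m + 1).choose (k + 1) : ℚ) := by
    intro k _
    have hk : (((1 + k : ℕ)) : ℚ) ≠ 0 := by positivity
    have hid : (m + 1) * m.choose k = (m + 1).choose (k + 1) * (k + 1) :=
      Nat.add_one_mul_choose_eq m k
    have hidq : ((m + 1 : ℕ) : ℚ) * (m.choose k : ℚ)
        = ((m + 1).choose (k + 1) : ℚ) * ((k + 1 : ℕ) : ℚ) := by exact_mod_cast hid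
    simp only [Nat.add_sub_cancel]
    push_cast at hk hidq ⊢
    field_simp
    linarith [hidq]
  rw [Finset.sum_congr rfl hterm]
  have hcast : ∑ k ∈ Finset.range (m + 1), ((m + 1).choose (k + 1) : ℚ)
      = ((2 ^ (m + 1) - 1 : ℕ) : ℚ) := by
    rw [← Nat.cast_sum, nat_choose_sum]
  rw [hcast]
  have h1 : (1 : ℕ) ≤ 2 ^ (m + 1) := Nat.one_le_two_pow
  push_cast [h1]
  ring

lemma sum_half (hn : 0 < n) (b : ZMod 2) :
    ∑ z ∈ Finset.univ.filter (fun z : Fin n → ZMod 2 => z ⟨0, hn⟩ = b),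
      ((runs z : ℚ))⁻¹ = (2 ^ n - 1) / (n : ℚ) := by
  have hne : n ≠ 0 := by omega
  have hstep : ∑ z ∈ Finset.univ.filter (fun z : Fin n → ZMod 2 => z ⟨0, hn⟩ = b),
      ((runs z : ℚ))⁻¹ = ∑ A ∈ (gS n).powerset, (((1 + A.card : ℕ)) : ℚ)⁻¹ := by
    apply Finset.sum_nbij' (i := fun z => gT z) (j := fun A => gVec b A)
    · intro z hz
      exact Finset.mem_powerset.2 (gT_subset_gS z)
    · intro A hA
      simp only [Finset.mem_filter, Finset.mem_univ, true_and]
      exact gVec_zero (Finset.mem_powerset.1 hA) _ rfl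
    · intro z hz
      simp only [Finset.mem_filter, Finset.mem_univ, true_and] at hz
      rw [← hz]
      exact gVec_gT hn z
    · intro A hA
      exact gT_gVec b (Finset.mem_powerset.1 hA)
    · intro z hz
      rw [runs_eq hne z]
  rw [hstep, sum_powerset_inv, card_gS hn]
  have hc : n - 1 + 1 = n := by omega
  rw [hc]
  exact q_choose_sum hn

end Aux

lemma half_bound (hn : 0 < n) (C : Finset (Fin n → ZMod 2)) (hC : grainCorrecting 1 C)
    (b : ZMod 2) : (C.filter fun z => z ⟨0, hn⟩ = b).card ≤ (2 ^ n - 1) / n := by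
  have hne : n ≠ 0 := by omega
  set Cb := C.filter fun z => z ⟨0, hn⟩ = b with hCbdef
  have hdisj : (↑Cb : Set (Fin n → ZMod 2)).PairwiseDisjoint gBall := by
    intro x hx y hy hxy
    have hx' : x ∈ C := (Finset.mem_filter.1 (by exact_mod_cast hx)).1
    have hy' : y ∈ C := (Finset.mem_filter.1 (by exact_mod_cast hy)).1
    have hd := hC x hx' y hy' hxy
    rw [Function.onFun, Finset.disjoint_left]
    intro z hzx hzy
    exact Set.disjoint_left.1 hd (gBall_subset x z hzx) (gBall_subset y z hzy)
  have hq : ((Cb.card : ℚ)) ≤ (2 ^ n - 1) / (n : ℚ) := by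
    calc (Cb.card : ℚ) = ∑ _x ∈ Cb, (1 : ℚ) := by simp
    _ ≤ ∑ x ∈ Cb, ∑ z ∈ gBall x, ((runs z : ℚ))⁻¹ :=
        Finset.sum_le_sum fun x _ => one_le_sum_gBall hne x
    _ = ∑ z ∈ Cb.biUnion gBall, ((runs z : ℚ))⁻¹ := (Finset.sum_biUnion hdisj).symm
    _ ≤ ∑ z ∈ Finset.univ.filter (fun z : Fin n → ZMod 2 => z ⟨0, hn⟩ = b),
          ((runs z : ℚ))⁻¹ := by
        apply Finset.sum_le_sum_of_subset_of_nonneg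
        · intro z hz
          obtain ⟨x, hx, hzx⟩ := Finset.mem_biUnion.1 hz
          simp only [Finset.mem_filter, Finset.mem_univ, true_and]
          rw [gBall_first hn x z hzx]
          exact (Finset.mem_filter.1 hx).2
        · intro z _ _
          positivity
    _ = (2 ^ n - 1) / (n : ℚ) := sum_half hn b
  have hnq : (0 : ℚ) < (n : ℚ) := by exact_mod_cast hn
  have hmul : ((Cb.card : ℚ)) * (n : ℚ) ≤ 2 ^ n - 1 := (le_div_iff₀ hnq).1 hq
  have h1 : (1 : ℕ) ≤ 2 ^ n := Nat.one_le_two_pow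
  have hnat : Cb.card * n ≤ 2 ^ n - 1 := by
    have : ((Cb.card * n : ℕ) : ℚ) ≤ ((2 ^ n - 1 : ℕ) : ℚ) := by
      push_cast [h1]
      exact hmul
    exact_mod_cast this
  exact (Nat.le_div_iff_mul_le hn).2 hnat


/-- `M(n,1) ≤ 2⌊(2^{n+1} - 2)/(2n)⌋` (natural division is the floor). -/
theorem stmt7 {n : ℕ} (hn : 1 ≤ n)
    (C : Finset (Fin n → ZMod 2)) (hC : grainCorrecting 1 C) :
    C.card ≤ 2 * ((2 ^ (n + 1) - 2) / (2 * n)) := by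
  have hn0 : 0 < n := hn
  have hdiv : (2 ^ (n + 1) - 2) / (2 * n) = (2 ^ n - 1) / n := by
    have hp : (2 : ℕ) ^ (n + 1) = 2 * 2 ^ n := by ring
    have h1 : (1 : ℕ) ≤ 2 ^ n := Nat.one_le_two_pow
    have he : (2 : ℕ) ^ (n + 1) - 2 = 2 * (2 ^ n - 1) := by omega
    rw [he, Nat.mul_div_mul_left _ _ (by norm_num : 0 < 2)]
  have key : ∀ a b : ℕ, a ≤ (2 ^ n - 1) / n → b ≤ (2 ^ n - 1) / n →
      a + b = C.card → C.card ≤ 2 * ((2 ^ n - 1) / n) := by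
    intro a b ha hb hs
    omega
  have hsplit : (C.filter fun z => z ⟨0, hn0⟩ = (0 : ZMod 2)).card
      + (C.filter fun z => z ⟨0, hn0⟩ = (1 : ZMod 2)).card = C.card := by
    have hiff : ∀ z : Fin n → ZMod 2, z ∈ C → (¬(z ⟨0, hn0⟩ = (0 : ZMod 2)) ↔ z ⟨0, hn0⟩ = (1 : ZMod 2)) := by
      intro z _
      have : ∀ a : ZMod 2, ¬(a = 0) ↔ a = 1 := by decide
      exact this _
    rw [← Finset.filter_congr hiff]
    exact Finset.card_filter_add_card_filter_not (p := fun z : Fin n → ZMod 2 => z ⟨0, hn0⟩ = (0 : ZMod 2))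
  rw [hdiv]
  exact key _ _ (half_bound hn0 C hC 0) (half_bound hn0 C hC 1) hsplit
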